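/- Let N ≥ 2 and let q : {0,...,N+1} → ℝ be a strictly positive pmf. Define p_N(a) = (a+1)·q(a+1)/((a+1)·q(a+1)+(N+1-a)·q(a)) for a = 0,...,N, let q' be the reduced pmf q'(a) = (C(N,a)/C(N+1,a))·q(a) + (C(N,a)/C(N+1,a+1))·q(a+1), and define p_{N-1}(a) = (a+1)·q'(a+1)/((a+1)·q'(a+1)+(N-a)·q'(a)) for a = 0,...,N-1. Then p_{N-1}(a) = p_N(a)/(1 - p_N(a+1) + p_N(a)) for all a = 0,...,N-1. -/

import Mathlib

lemma stmt_2_key (A B C x y : ℝ) (hA : 0 < A) (hB : 0 < B) (hC : 0 < C)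
    (hx : 0 < x) (hy : 0 < y) :
    (x * ((y * B + (x + 1) * C) / (x + y))) /
      (x * ((y * B + (x + 1) * C) / (x + y)) + y * (((y + 1) * A + x * B) / (x + y)))
    = (x * B / (x * B + (y + 1) * A)) /
      (1 - (x + 1) * C / ((x + 1) * C + y * B) + x * B / (x * B + (y + 1) * A)) := by
  have hxy : (0:ℝ) < x + y := by linarith
  have hD1 : (0:ℝ) < x * B + (y + 1) * A := by positivity
  have hD2 : (0:ℝ) < (x + 1) * C + y * B := by positivity
  have h1 : 1 - (x + 1) * C / ((x + 1) * C + y * B) = y * B / ((x + 1) * C + y * B) := by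
    field_simp
    ring
  rw [h1]
  have hDL : (0:ℝ) < x * ((y * B + (x + 1) * C) / (x + y)) + y * (((y + 1) * A + x * B) / (x + y)) := by
    positivity
  have hDR : (0:ℝ) < y * B / ((x + 1) * C + y * B) + x * B / (x * B + (y + 1) * A) := by
    positivity
  rw [div_eq_div_iff hDL.ne' hDR.ne']
  field_simp
  ring

lemma stmt_2_c2 (N b : ℕ) (hb : b ≤ N) :
    (N.choose b : ℝ) / ((N + 1).choose (b + 1) : ℝ) = ((b : ℝ) + 1) / ((N : ℝ) + 1) := by
  have h := Nat.add_one_mul_choose_eq N b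
  have hpos : 0 < (N + 1).choose (b + 1) := Nat.choose_pos (by omega)
  rw [div_eq_div_iff (by exact_mod_cast hpos.ne') (by positivity)]
  have : ((N + 1) * N.choose b : ℝ) = ((N + 1).choose (b + 1) * (b + 1) : ℝ) := by
    exact_mod_cast congrArg (Nat.cast : ℕ → ℝ) h
  push_cast at this ⊢
  linarith

lemma stmt_2_c1 (N b : ℕ) (hb : b ≤ N) :
    (N.choose b : ℝ) / ((N + 1).choose b : ℝ) = ((N : ℝ) + 1 - (b : ℝ)) / ((N : ℝ) + 1) := by
  have h1 : (N + 1).choose (b + 1) * (b + 1) = (N + 1).choose b * (N + 1 - b) :=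
    Nat.choose_succ_right_eq (N + 1) b
  have h2 := Nat.add_one_mul_choose_eq N b
  have h3 : (N + 1) * N.choose b = (N + 1).choose b * (N + 1 - b) := by rw [h2, h1]
  have hpos : 0 < (N + 1).choose b := Nat.choose_pos (by omega)
  rw [div_eq_div_iff (by exact_mod_cast hpos.ne') (by positivity)]
  have h4 := congrArg (Nat.cast : ℕ → ℝ) h3
  push_cast [Nat.cast_sub (show b ≤ N + 1 by omega)] at h4
  push_cast
  linarith

/-- The conditional-probability reduction formula: predictive probabilities
based on `N-1` conditioning events are obtained from those based on `N`
conditioning events via `p_{a,N-1} = p_{a,N}/(1 - p_{a+1,N} + p_{a,N})`. -/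
theorem stmt_2 (N : ℕ) (hN : 2 ≤ N) (q q' pN pN' : ℕ → ℝ)
    (hpos : ∀ a ≤ N + 1, 0 < q a)
    (hsum : ∑ a ∈ Finset.range (N + 2), q a = 1)
    (hpN : ∀ a ≤ N, pN a =
        (((a : ℝ) + 1) * q (a + 1)) /
          (((a : ℝ) + 1) * q (a + 1) + ((N : ℝ) + 1 - (a : ℝ)) * q a))
    (hq' : ∀ a ≤ N, q' a =
        ((N.choose a : ℝ) / ((N + 1).choose a : ℝ)) * q a +
          ((N.choose a : ℝ) / ((N + 1).choose (a + 1) : ℝ)) * q (a + 1))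
    (hpN' : ∀ a ≤ N - 1, pN' a =
        (((a : ℝ) + 1) * q' (a + 1)) /
          (((a : ℝ) + 1) * q' (a + 1) + ((N : ℝ) - (a : ℝ)) * q' a)) :
    ∀ a ≤ N - 1, pN' a = pN a / (1 - pN (a + 1) + pN a) := by
  intro a ha
  have haN : a + 1 ≤ N := by omega
  have haN' : a ≤ N := by omega
  have hA : 0 < q a := hpos a (by omega)
  have hB : 0 < q (a + 1) := hpos (a + 1) (by omega)
  have hC : 0 < q (a + 2) := hpos (a + 2) (by omega)
  have hx : (0:ℝ) < (a : ℝ) + 1 := by positivity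
  have hy : (0:ℝ) < (N : ℝ) - (a : ℝ) := by
    have : (a : ℝ) + 1 ≤ (N : ℝ) := by exact_mod_cast haN
    linarith
  have q'a : q' a = (((N : ℝ) - (a : ℝ) + 1) * q a + ((a : ℝ) + 1) * q (a + 1)) /
      (((a : ℝ) + 1) + ((N : ℝ) - (a : ℝ))) := by
    rw [hq' a haN', stmt_2_c1 N a haN', stmt_2_c2 N a haN']
    ring
  have q'a1 : q' (a + 1) = (((N : ℝ) - (a : ℝ)) * q (a + 1) + (((a : ℝ) + 1) + 1) * q (a + 2)) /
      (((a : ℝ) + 1) + ((N : ℝ) - (a : ℝ))) := by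
    rw [hq' (a + 1) haN, stmt_2_c1 N (a + 1) haN, stmt_2_c2 N (a + 1) haN]
    push_cast
    ring
  have key := stmt_2_key (q a) (q (a + 1)) (q (a + 2)) ((a : ℝ) + 1) ((N : ℝ) - (a : ℝ))
    hA hB hC hx hy
  rw [hpN' a ha, hpN a haN', hpN (a + 1) haN, q'a, q'a1]
  push_cast
  push_cast at key
  linear_combination key
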